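/- arXiv:1712.01079 — 2 statements merged into one kernel-verified Lean document; each statement's English description precedes it below -/
import Mathlib

section
/- Let Γ be a connected, triangle-free, planar simplicial graph with at least five vertices and no separating vertices or edges, with a fixed planar embedding f. If (Γ_1, Γ_2) is a strong visual decomposition of Γ along a 4-cycle σ with respect to f, then each Γ_i is connected, triangle-free, planar, has at least five vertices, and has no separating vertices or edges. -/
open Set

namespace Paper

/-- Word metric distance with respect to a (symmetrized) generating set `S`. -/
noncomputable def wordDist {G : Type*} [Group G] (S : Set G) (g h : G) : ℕ :=
  sInf {n | ∃ w : List G, w.length = n ∧ (∀ x ∈ w, x ∈ S ∨ x⁻¹ ∈ S) ∧ g⁻¹ * h = w.prod}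

/-- A discrete `(K, C)`-quasi-geodesic in the word metric. -/
def IsQuasiGeodesic {G : Type*} [Group G] (S : Set G) (K C : ℝ) {n : ℕ}
    (q : Fin (n + 1) → G) : Prop :=
  ∀ i j : Fin (n + 1),
    (wordDist S (q i) (q j) : ℝ) ≤ K * |((i : ℕ) : ℝ) - ((j : ℕ) : ℝ)| + C ∧
      |((i : ℕ) : ℝ) - ((j : ℕ) : ℝ)| / K - C ≤ (wordDist S (q i) (q j) : ℝ)

/-- A subset `H` is strongly quasiconvex (Morse) with respect to the word metric of `S`:
every quasi-geodesic with endpoints in `H` stays uniformly close to `H`. -/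
def StronglyQuasiconvex {G : Type*} [Group G] (S : Set G) (H : Set G) : Prop :=
  ∀ K C : ℝ, 1 ≤ K → 0 ≤ C → ∃ M : ℝ, ∀ (n : ℕ) (q : Fin (n + 1) → G),
    q 0 ∈ H → q (Fin.last n) ∈ H → IsQuasiGeodesic S K C q →
      ∀ i, ∃ h ∈ H, (wordDist S (q i) h : ℝ) ≤ M

/-- The subgroup `H` (with generating data `T`) is undistorted in `G` (with generating data `S`):
the inclusion is a quasi-isometric embedding for the word metrics. -/
def Undistorted {G : Type*} [Group G] (S : Set G) (H : Subgroup G) (T : Set H) : Prop :=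
  ∃ K C : ℝ, 1 ≤ K ∧ 0 ≤ C ∧ ∀ a b : H,
    (wordDist T a b : ℝ) ≤ K * (wordDist S (a : G) (b : G)) + C ∧
      (wordDist S (a : G) (b : G) : ℝ) ≤ K * (wordDist T a b) + C

/-- Quasi-isometry between two groups with chosen generating sets. -/
def QuasiIsometric (G : Type*) [Group G] (S : Set G) (H : Type*) [Group H] (T : Set H) :
    Prop :=
  ∃ (φ : G → H) (K C : ℝ), 1 ≤ K ∧ 0 ≤ C ∧
    (∀ a b : G,
      (wordDist T (φ a) (φ b) : ℝ) ≤ K * (wordDist S a b) + C ∧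
        (wordDist S a b : ℝ) ≤ K * (wordDist T (φ a) (φ b)) + C) ∧
    ∀ h : H, ∃ g : G, (wordDist T (φ g) h : ℝ) ≤ C

/-- A group action on a graph by graph automorphisms. -/
def ActsOnGraph (G : Type*) [Group G] {V : Type*} [MulAction G V] (Γ : SimpleGraph V) :
    Prop :=
  ∀ (g : G) (v w : V), Γ.Adj v w → Γ.Adj (g • v) (g • w)

/-- Relators of the right-angled Coxeter group of a graph. -/
def racgRels {V : Type*} (Γ : SimpleGraph V) : Set (FreeGroup V) :=
  {r | ∃ v : V, r = FreeGroup.of v * FreeGroup.of v} ∪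
    {r | ∃ v w : V, Γ.Adj v w ∧ r = (FreeGroup.of v * FreeGroup.of w) ^ 2}

/-- The right-angled Coxeter group of a simplicial graph. -/
abbrev RACG {V : Type*} (Γ : SimpleGraph V) : Type _ := PresentedGroup (racgRels Γ)

/-- The standard (vertex) generating set of a RACG. -/
def racgGen {V : Type*} (Γ : SimpleGraph V) : Set (RACG Γ) :=
  Set.range fun v : V => (PresentedGroup.of v : RACG Γ)

/-- The special subgroup of a RACG generated by a set of vertices. -/
def specialSubgroup {V : Type*} (Γ : SimpleGraph V) (J : Set V) : Subgroup (RACG Γ) :=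
  Subgroup.closure ((fun v : V => (PresentedGroup.of v : RACG Γ)) '' J)

/-- Relators of the right-angled Artin group of a graph. -/
def raagRels {V : Type*} (Γ : SimpleGraph V) : Set (FreeGroup V) :=
  {r | ∃ v w : V, Γ.Adj v w ∧
    r = FreeGroup.of v * FreeGroup.of w * (FreeGroup.of v)⁻¹ * (FreeGroup.of w)⁻¹}

/-- The right-angled Artin group of a simplicial graph. -/
abbrev RAAG {V : Type*} (Γ : SimpleGraph V) : Type _ := PresentedGroup (raagRels Γ)

/-- The standard (vertex) generating set of a RAAG. -/
def raagGen {V : Type*} (Γ : SimpleGraph V) : Set (RAAG Γ) :=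
  Set.range fun v : V => (PresentedGroup.of v : RAAG Γ)

/-- The coned-off Cayley graph of `G` with respect to the generating set `S` and the
peripheral collection `P`. -/
def conedOffCayley (G : Type*) [Group G] (S : Set G) {ι : Type*} (P : ι → Subgroup G) :
    SimpleGraph (G ⊕ Σ i : ι, G ⧸ P i) :=
  SimpleGraph.fromRel fun x y =>
    match x, y with
    | Sum.inl g, Sum.inl h => g⁻¹ * h ∈ S
    | Sum.inl g, Sum.inr ⟨i, c⟩ => (QuotientGroup.mk g : G ⧸ P i) = c
    | _, _ => False

/-- A connected graph is hyperbolic if its path metric satisfies the four-point condition. -/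
def IsHyperbolicGraph {α : Type*} (Γ : SimpleGraph α) : Prop :=
  Γ.Connected ∧ ∃ δ : ℝ, 0 ≤ δ ∧ ∀ x y z w : α,
    (Γ.dist x y : ℝ) + (Γ.dist z w : ℝ) ≤
      max ((Γ.dist x z : ℝ) + (Γ.dist y w : ℝ)) ((Γ.dist x w : ℝ) + (Γ.dist y z : ℝ)) + δ

/-- A graph is fine if each edge lies in only finitely many circuits of each bounded length. -/
def IsFineGraph {α : Type*} (Γ : SimpleGraph α) : Prop :=
  ∀ (n : ℕ) (v w : α), Γ.Adj v w →
    {p : Γ.Walk v v | p.IsCircuit ∧ p.length ≤ n ∧ s(v, w) ∈ p.edges}.Finite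

/-- `G` is hyperbolic relative to the finite collection of subgroups `P`. -/
def RelativelyHyperbolic (G : Type*) [Group G] {ι : Type*} (P : ι → Subgroup G) : Prop :=
  Finite ι ∧ ∃ S : Finset G, Subgroup.closure (S : Set G) = ⊤ ∧
    IsHyperbolicGraph (conedOffCayley G (S : Set G) P) ∧
    IsFineGraph (conedOffCayley G (S : Set G) P)

/-- There is a path from `x` to `y` of length at most `L` in the Cayley graph of `(G,S)`
avoiding the ball of radius `r` about the identity. -/
def PathAvoiding {G : Type*} [Group G] (S : Set G) (r : ℕ) (x y : G) (L : ℕ) : Prop :=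
  ∃ (m : ℕ) (p : Fin (m + 1) → G), p 0 = x ∧ p (Fin.last m) = y ∧ m ≤ L ∧
    (∀ i : Fin m, wordDist S (p i.castSucc) (p i.succ) ≤ 1) ∧
    ∀ i, r ≤ wordDist S 1 (p i)

/-- The divergence of `(G,S)` is bounded above by (a linear function of) `f`. -/
def DivergenceUpperBound (G : Type*) [Group G] (S : Set G) (f : ℕ → ℕ) : Prop :=
  ∃ A B : ℕ, 0 < A ∧ ∀ (n : ℕ) (x y : G), wordDist S 1 x = n → wordDist S 1 y = n →
    PathAvoiding S (n / 2) x y (A * f n + B)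

/-- The divergence of `(G,S)` is bounded below by (a linear function of) `f`. -/
def DivergenceLowerBound (G : Type*) [Group G] (S : Set G) (f : ℕ → ℕ) : Prop :=
  ∃ A B : ℕ, 0 < A ∧ ∀ N : ℕ, ∃ n, N ≤ n ∧ ∃ x y : G,
    wordDist S 1 x = n ∧ wordDist S 1 y = n ∧
    ∀ L : ℕ, PathAvoiding S (n / 2) x y L → f n ≤ A * L + B

def HasLinearDivergence (G : Type*) [Group G] (S : Set G) : Prop :=
  DivergenceUpperBound G S (fun n => n) ∧ DivergenceLowerBound G S (fun n => n)

def HasQuadraticDivergence (G : Type*) [Group G] (S : Set G) : Prop :=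
  DivergenceUpperBound G S (fun n => n ^ 2) ∧ DivergenceLowerBound G S (fun n => n ^ 2)

def HasExponentialDivergence (G : Type*) [Group G] (S : Set G) : Prop :=
  (∃ b : ℕ, 2 ≤ b ∧ DivergenceUpperBound G S (fun n => b ^ n)) ∧
    DivergenceLowerBound G S (fun n => 2 ^ n)

/-- `c` parametrizes an induced 4-cycle of `Γ`. -/
def IsInducedFourCycle {V : Type*} (Γ : SimpleGraph V) (c : Fin 4 → V) : Prop :=
  Function.Injective c ∧ ∀ i j : Fin 4, Γ.Adj (c i) (c j) ↔ (j = i + 1 ∨ i = j + 1)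

/-- `s` is the vertex set of an induced 4-cycle of `Γ`. -/
def IsFourCycleSet {V : Type*} (Γ : SimpleGraph V) (s : Set V) : Prop :=
  ∃ c : Fin 4 → V, IsInducedFourCycle Γ c ∧ Set.range c = s

/-- The four-cycle graph `Γ⁴`: vertices are the induced 4-cycles of `Γ`, adjacent when the
corresponding 4-cycles share a pair of non-adjacent vertices. -/
def fourCycleGraph {V : Type*} (Γ : SimpleGraph V) :
    SimpleGraph {s : Set V // IsFourCycleSet Γ s} :=
  SimpleGraph.fromRel fun s t =>
    ∃ a b : V, a ≠ b ∧ ¬ Γ.Adj a b ∧ a ∈ s.1 ∩ t.1 ∧ b ∈ s.1 ∩ t.1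

/-- `Γ` is CFS: `Γ = Ω * K` with `K` a (possibly empty) clique and `Ω` nonempty such that
`Ω⁴` has a connected component whose support is all of `V(Ω)`. -/
def CFS {V : Type*} (Γ : SimpleGraph V) : Prop :=
  ∃ Ω K : Set V, Ω ∪ K = Set.univ ∧ Disjoint Ω K ∧ Ω.Nonempty ∧
    (∀ a ∈ K, ∀ b ∈ K, a ≠ b → Γ.Adj a b) ∧
    (∀ a ∈ Ω, ∀ b ∈ K, Γ.Adj a b) ∧
    ∃ s₀ : {s : Set ↥Ω // IsFourCycleSet (Γ.induce Ω) s},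
      ∀ v : ↥Ω, ∃ t : {s : Set ↥Ω // IsFourCycleSet (Γ.induce Ω) s},
        (fourCycleGraph (Γ.induce Ω)).Reachable s₀ t ∧ v ∈ t.1

/-- A (topological) planar embedding of the graph `Γ`: vertices go to distinct points of the
plane, each edge to an arc between the images of its endpoints, arcs meeting only at common
endpoint vertices. -/
structure PlanarEmbedding {V : Type*} (Γ : SimpleGraph V) where
  vmap : V → ℝ × ℝ
  inj : Function.Injective vmap
  emap : Sym2 V → Set (ℝ × ℝ)
  arc : ∀ ⦃u v : V⦄, Γ.Adj u v → ∃ γ : Path (vmap u) (vmap v),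
    Function.Injective (⇑γ) ∧ Set.range (⇑γ) = emap s(u, v)
  disjointEdges : ∀ e ∈ Γ.edgeSet, ∀ e' ∈ Γ.edgeSet, e ≠ e' →
    emap e ∩ emap e' ⊆ Set.range vmap
  vertexOnEdge : ∀ e ∈ Γ.edgeSet, ∀ v : V, vmap v ∈ emap e → v ∈ e

/-- The image in the plane of the full subgraph of `Γ` spanned by the vertex set `W`. -/
def PlanarEmbedding.imageOf {V : Type*} {Γ : SimpleGraph V} (f : PlanarEmbedding Γ)
    (W : Set V) : Set (ℝ × ℝ) :=
  (f.vmap '' W) ∪ ⋃ (e : Sym2 V) (_ : e ∈ Γ.edgeSet) (_ : ∀ x ∈ e, x ∈ W), f.emap e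

/-- The 4-cycle `c` strongly separates the subgraph of `Γ` spanned by `W` with respect to the
embedding `f`: the image of the subgraph meets (at least) two distinct connected components of
the complement of the image of `c`. -/
def StronglySeparatesIn {V : Type*} {Γ : SimpleGraph V} (f : PlanarEmbedding Γ)
    (c : Fin 4 → V) (W : Set V) : Prop :=
  ∃ x y : ℝ × ℝ, x ∈ f.imageOf W ∧ y ∈ f.imageOf W ∧
    x ∉ f.imageOf (Set.range c) ∧ y ∉ f.imageOf (Set.range c) ∧
    y ∉ connectedComponentIn (f.imageOf (Set.range c))ᶜ x

/-- `(W₁, W₂)` is a strong visual decomposition of `Γ` along the induced 4-cycle `c`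
with respect to the embedding `f`. -/
def StrongVisualDecomposition {V : Type*} {Γ : SimpleGraph V} (f : PlanarEmbedding Γ)
    (c : Fin 4 → V) (W₁ W₂ : Set V) : Prop :=
  IsInducedFourCycle Γ c ∧
  W₁ ∪ W₂ = Set.univ ∧ W₁ ∩ W₂ = Set.range c ∧
  (W₁ \ Set.range c).Nonempty ∧ (W₂ \ Set.range c).Nonempty ∧
  (∀ v ∈ W₁ \ Set.range c, ∀ w ∈ W₂ \ Set.range c,
    f.vmap w ∉ connectedComponentIn (f.imageOf (Set.range c))ᶜ (f.vmap v)) ∧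
  (∀ u v : V, Γ.Adj u v → (u ∈ W₁ ∧ v ∈ W₁) ∨ (u ∈ W₂ ∧ v ∈ W₂))

/-- Standing Assumptions: connected, triangle-free, planar, at least five vertices,
no separating vertices or edges. -/
def StandingAssumptions {V : Type*} (Γ : SimpleGraph V) : Prop :=
  Γ.Connected ∧ Γ.CliqueFree 3 ∧ Nonempty (PlanarEmbedding Γ) ∧ 5 ≤ Nat.card V ∧
  (∀ v : V, (Γ.induce ({v}ᶜ : Set V)).Connected) ∧
  (∀ u v : V, Γ.Adj u v → (Γ.induce ({u, v}ᶜ : Set V)).Connected)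

/-- `Γ` contains (as a subgraph) a suspension of three distinct points. -/
def ContainsSuspThree {V : Type*} (Γ : SimpleGraph V) : Prop :=
  ∃ (a : Fin 3 → V) (b : Fin 2 → V), Function.Injective a ∧ Function.Injective b ∧
    (∀ i j, a i ≠ b j) ∧ ∀ i j, Γ.Adj (a i) (b j)

/-- `Γ` is (exactly) the suspension of three distinct points. -/
def IsSuspensionOfThreePoints {V : Type*} (Γ : SimpleGraph V) : Prop :=
  ∃ (a : Fin 3 → V) (b : Fin 2 → V), Function.Injective a ∧ Function.Injective b ∧
    (∀ i j, a i ≠ b j) ∧ Set.range a ∪ Set.range b = Set.univ ∧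
    ∀ x y : V, Γ.Adj x y ↔ ((∃ i j, x = a i ∧ y = b j) ∨ (∃ i j, x = b j ∧ y = a i))

/-- `Γ` is a suspension of a set of distinct (pairwise non-adjacent) vertices. -/
def IsSuspension {V : Type*} (Γ : SimpleGraph V) : Prop :=
  ∃ b₁ b₂ : V, b₁ ≠ b₂ ∧ ¬ Γ.Adj b₁ b₂ ∧
    (∀ v, v ≠ b₁ → v ≠ b₂ → Γ.Adj v b₁ ∧ Γ.Adj v b₂) ∧
    (∀ u v, u ≠ b₁ → u ≠ b₂ → v ≠ b₁ → v ≠ b₂ → ¬ Γ.Adj u v)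

/-- `Γ` is a join of two nonempty subgraphs. -/
def IsJoin {V : Type*} (Γ : SimpleGraph V) : Prop :=
  ∃ A B : Set V, A.Nonempty ∧ B.Nonempty ∧ Disjoint A B ∧ A ∪ B = Set.univ ∧
    ∀ a ∈ A, ∀ b ∈ B, Γ.Adj a b

/-- `Γ` is prime: not a 4-cycle, and some planar embedding has no strongly separating
4-cycle. -/
def IsPrime {V : Type*} (Γ : SimpleGraph V) : Prop :=
  (¬ ∃ c : Fin 4 → V, IsInducedFourCycle Γ c ∧ Set.range c = Set.univ) ∧
  ∃ f : PlanarEmbedding Γ, ∀ c : Fin 4 → V, IsInducedFourCycle Γ c →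
    ¬ StronglySeparatesIn f c Set.univ

/-- The closed half-space model for 3-manifolds with boundary. -/
def HalfSpace3 : Set (Fin 3 → ℝ) := {y | 0 ≤ y 0}

/-- A topological 3-manifold, possibly with boundary. -/
def IsManifold3WithBoundary (M : Type*) [TopologicalSpace M] : Prop :=
  T2Space M ∧ SecondCountableTopology M ∧ ∀ x : M, ∃ U : Set M, IsOpen U ∧ x ∈ U ∧
    ∃ W : Set ↥HalfSpace3, IsOpen W ∧ Nonempty (↥U ≃ₜ ↥W)

/-- A compact 3-manifold foliated by circles (Seifert fibered, by Epstein's theorem). -/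
def SeifertLike (M : Type*) [TopologicalSpace M] : Prop :=
  IsManifold3WithBoundary M ∧ CompactSpace M ∧ Nonempty M ∧
  ∃ (B : Type) (_ : TopologicalSpace B) (p : M → B),
    Continuous p ∧ Function.Surjective p ∧ ∀ b : B, Nonempty (↥(p ⁻¹' {b}) ≃ₜ Circle)

abbrev Torus : Type := Circle × Circle

/-- A (non-geometric) graph manifold: a compact 3-manifold, not itself Seifert fibered,
which is a union of finitely many closed Seifert pieces meeting along disjoint unions of
tori. -/
def IsGraphManifold (M : Type*) [TopologicalSpace M] : Prop :=
  IsManifold3WithBoundary M ∧ CompactSpace M ∧ ¬ SeifertLike M ∧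
  ∃ (n : ℕ) (P : Fin n → Set M),
    (⋃ i, P i) = Set.univ ∧
    (∀ i, IsClosed (P i) ∧ SeifertLike ↥(P i)) ∧
    ∀ i j, i ≠ j → ∃ k : ℕ, Nonempty (↥(P i ∩ P j) ≃ₜ (Fin k × Torus))

/-- A pointed topological space. -/
structure PointedSpace where
  carrier : Type
  top : TopologicalSpace carrier
  pt : carrier

attribute [instance] PointedSpace.top

/-- `G` is virtually the fundamental group of a Seifert fibered 3-manifold. -/
def VirtuallySeifert (G : Type*) [Group G] : Prop :=
  ∃ H : Subgroup G, H.FiniteIndex ∧ ∃ X : PointedSpace,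
    SeifertLike X.carrier ∧ Nonempty (H ≃* FundamentalGroup X.carrier X.pt)

/-- `G` is virtually the fundamental group of a graph manifold. -/
def VirtuallyGraphManifold (G : Type*) [Group G] : Prop :=
  ∃ H : Subgroup G, H.FiniteIndex ∧ ∃ X : PointedSpace,
    IsGraphManifold X.carrier ∧ Nonempty (H ≃* FundamentalGroup X.carrier X.pt)

/-- A vertex-colored graph. -/
structure ColoredGraph (C : Type*) where
  V : Type
  graph : SimpleGraph V
  color : V → C

/-- A weak covering of colored graphs: a color-preserving graph homomorphism with the
edge-lifting property. -/
def WeakCovering {C : Type*} (Λ Λ' : ColoredGraph C) (f : Λ.V → Λ'.V) : Prop :=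
  (∀ v, Λ'.color (f v) = Λ.color v) ∧
  (∀ v w, Λ.graph.Adj v w → Λ'.graph.Adj (f v) (f w)) ∧
  (∀ v w', Λ'.graph.Adj (f v) w' → ∃ w, Λ.graph.Adj v w ∧ f w = w')

/-- Two colored graphs are bisimilar if they weakly cover a common colored graph. -/
def Bisimilar {C : Type*} (Λ₁ Λ₂ : ColoredGraph C) : Prop :=
  ∃ (Λ : ColoredGraph C) (f₁ : Λ₁.V → Λ.V) (f₂ : Λ₂.V → Λ.V),
    WeakCovering Λ₁ Λ f₁ ∧ WeakCovering Λ₂ Λ f₂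

/-- Isomorphism of colored graphs. -/
def ColoredIso {C : Type*} (Λ₁ Λ₂ : ColoredGraph C) : Prop :=
  ∃ e : Λ₁.V ≃ Λ₂.V, (∀ v, Λ₂.color (e v) = Λ₁.color v) ∧
    ∀ v w, Λ₁.graph.Adj v w ↔ Λ₂.graph.Adj (e v) (e w)
/-- A visual decomposition tree of a CFS graph `Γ` satisfying the Standing Assumptions:
a finite tree whose vertices carry suspension subgraphs `Γv t = susp(Av t)` (with the two
suspension points `pole1 t`, `pole2 t`), glued along induced 4-cycles. -/
structure VisualDecompTree (V : Type*) (Γ : SimpleGraph V) where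
  T : Type
  finite : Finite T
  tree : SimpleGraph T
  isTree : tree.IsTree
  Γv : T → Set V
  Av : T → Set V
  pole1 : T → V
  pole2 : T → V
  susp : ∀ t : T,
    pole1 t ≠ pole2 t ∧ ¬ Γ.Adj (pole1 t) (pole2 t) ∧
    Γv t = Av t ∪ {pole1 t, pole2 t} ∧ pole1 t ∉ Av t ∧ pole2 t ∉ Av t ∧
    (∀ a ∈ Av t, Γ.Adj a (pole1 t) ∧ Γ.Adj a (pole2 t)) ∧
    (∀ a ∈ Av t, ∀ b ∈ Av t, ¬ Γ.Adj a b)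
  three : ∀ t : T, 3 ≤ Nat.card (Av t)
  distinct : Function.Injective Γv
  covers : (⋃ t : T, Γv t) = Set.univ
  edges4 : ∀ t₁ t₂ : T, tree.Adj t₁ t₂ →
    Γv t₁ ∩ Γv t₂ = {pole1 t₁, pole2 t₁, pole1 t₂, pole2 t₂} ∧
    IsFourCycleSet Γ (Γv t₁ ∩ Γv t₂)
  nonedges : ∀ t₁ t₂ : T, t₁ ≠ t₂ → ¬ tree.Adj t₁ t₂ →
    ¬ IsFourCycleSet Γ (Γv t₁ ∩ Γv t₂)
  polesIn : ∀ t₁ t₂ : T, tree.Adj t₁ t₂ → pole1 t₁ ∈ Av t₂ ∧ pole2 t₁ ∈ Av t₂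

/-- The weight of a vertex of a visual decomposition tree. -/
noncomputable def VisualDecompTree.weight {V : Type*} {Γ : SimpleGraph V} (D : VisualDecompTree V Γ)
    (t : D.T) : ℕ := Nat.card (D.Av t)

/-- The degree of a vertex of a visual decomposition tree. -/
noncomputable def VisualDecompTree.degree {V : Type*} {Γ : SimpleGraph V} (D : VisualDecompTree V Γ)
    (t : D.T) : ℕ := Nat.card (D.tree.neighborSet t)

/-- A vertex is black if its weight strictly exceeds its degree (white otherwise). -/
def VisualDecompTree.Black {V : Type*} {Γ : SimpleGraph V} (D : VisualDecompTree V Γ)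
    (t : D.T) : Prop := D.degree t < D.weight t

/-- The visual decomposition tree as a colored graph (colored by the black/white property). -/
def VisualDecompTree.colored {V : Type*} {Γ : SimpleGraph V} (D : VisualDecompTree V Γ) :
    ColoredGraph Prop :=
  ⟨D.T, D.tree, fun t => D.Black t⟩



section Stmt6Aux

open SimpleGraph

private lemma fin4_f1 : ∀ k : Fin 4, k + 3 = k + 2 + 1 := by decide
private lemma fin4_f2 : ∀ k : Fin 4, k = (k + 3) + 1 := by decide
private lemma fin4_f3 : ∀ k : Fin 4, k + 2 = (k + 1) + 1 := by decide
private lemma fin4_cases : ∀ k j : Fin 4, j = k ∨ j = k + 1 ∨ j = k + 2 ∨ j = k + 3 := by decide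
private lemma fin4_n2 : ∀ k : Fin 4, k + 2 ≠ k := by decide
private lemma fin4_n3 : ∀ k : Fin 4, k + 3 ≠ k := by decide
private lemma fin4_n21 : ∀ k : Fin 4, k + 2 ≠ k + 1 := by decide
private lemma fin4_n31 : ∀ k : Fin 4, k + 3 ≠ k + 1 := by decide

private lemma transfer_conn {V : Type} (Γ : SimpleGraph V) (W : Set V) (S : Set ↥W)
    (h : (Γ.induce (W \ (Subtype.val '' S))).Connected) :
    ((Γ.induce W).induce Sᶜ).Connected := by
  refine h.map ⟨fun x => ⟨⟨x.1, x.2.1⟩, fun hm => x.2.2 ⟨_, hm, rfl⟩⟩, fun hadj => hadj⟩ ?_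
  rintro ⟨⟨x, hxW⟩, hxS⟩
  refine ⟨⟨x, hxW, ?_⟩, rfl⟩
  rintro ⟨y, hyS, hy⟩
  exact hxS (by rwa [show (⟨x, hxW⟩ : ↥W) = y from Subtype.ext hy.symm])

private lemma conn_univ {V : Type} (Γ : SimpleGraph V) (h : Γ.Connected) :
    (Γ.induce (Set.univ : Set V)).Connected :=
  h.map ⟨fun v => ⟨v, mem_univ v⟩, fun hadj => hadj⟩ (fun ⟨v, _⟩ => ⟨v, rfl⟩)

private lemma side_reach {V : Type} (Γ : SimpleGraph V) (c : Fin 4 → V) (W₁ W₂ : Set V)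
    (hinter : W₁ ∩ W₂ = Set.range c)
    (hedge : ∀ u v : V, Γ.Adj u v → (u ∈ W₁ ∧ v ∈ W₁) ∨ (u ∈ W₂ ∧ v ∈ W₂))
    (S : Set V) (t0 : V) (ht0S : t0 ∉ S) (ht0W : t0 ∈ W₁)
    (hσ : ∀ x, x ∈ Set.range c → ∀ (hx : x ∈ W₁ \ S) (ht : t0 ∈ W₁ \ S),
       (Γ.induce (W₁ \ S)).Reachable ⟨x, hx⟩ ⟨t0, ht⟩)
    (hconn : (Γ.induce Sᶜ).Connected) :
    (Γ.induce (W₁ \ S)).Connected := by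
  have key : ∀ (a b : ↥(Sᶜ : Set V)) (p : (Γ.induce (Sᶜ : Set V)).Walk a b)
      (hb : ↑b = t0) (ha : ↑a ∈ W₁),
      (Γ.induce (W₁ \ S)).Reachable ⟨↑a, ha, a.2⟩ ⟨t0, ht0W, ht0S⟩ := by
    intro a b p
    induction p with
    | nil =>
      intro hb ha
      subst hb
      exact SimpleGraph.Reachable.refl _
    | @cons a b _ h p ih =>
      intro hb ha
      by_cases hac : ↑a ∈ Set.range c
      · exact hσ _ hac ⟨ha, a.2⟩ ⟨ht0W, ht0S⟩
      · have hbW : ↑b ∈ W₁ := by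
          rcases hedge _ _ h with ⟨_, h2⟩ | ⟨h1, _⟩
          · exact h2
          · exact absurd (hinter ▸ ⟨ha, h1⟩) hac
        have hadj : (Γ.induce (W₁ \ S)).Adj ⟨↑a, ha, a.2⟩ ⟨↑b, hbW, b.2⟩ := h
        exact hadj.reachable.trans (ih hb hbW)
  rw [SimpleGraph.connected_iff]
  refine ⟨?_, ⟨⟨t0, ht0W, ht0S⟩⟩⟩
  rintro ⟨x, hx⟩ ⟨y, hy⟩
  have rx := key ⟨x, hx.2⟩ ⟨t0, ht0S⟩ ((hconn.preconnected ⟨x, hx.2⟩ ⟨t0, ht0S⟩).some) rfl hx.1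
  have ry := key ⟨y, hy.2⟩ ⟨t0, ht0S⟩ ((hconn.preconnected ⟨y, hy.2⟩ ⟨t0, ht0S⟩).some) rfl hy.1
  exact rx.trans ry.symm

private lemma sigma_reach {V : Type} (Γ : SimpleGraph V) (c : Fin 4 → V)
    (hcyc : IsInducedFourCycle Γ c) (W₁ : Set V)
    (hcW : ∀ j, c j ∈ W₁) (S : Set V) (k : Fin 4)
    (h2 : c (k + 2) ∉ S) (h3 : c (k + 3) ∉ S) :
    ∀ x, x ∈ Set.range c → ∀ (hx : x ∈ W₁ \ S) (ht : c (k + 2) ∈ W₁ \ S),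
      (Γ.induce (W₁ \ S)).Reachable ⟨x, hx⟩ ⟨c (k + 2), ht⟩ := by
  rintro x ⟨j, rfl⟩ hx ht
  have adj32 : (Γ.induce (W₁ \ S)).Adj ⟨c (k + 3), hcW _, h3⟩ ⟨c (k + 2), ht⟩ :=
    (hcyc.2 (k + 3) (k + 2)).mpr (Or.inr (fin4_f1 k))
  rcases fin4_cases k j with rfl | rfl | rfl | rfl
  · have a1 : (Γ.induce (W₁ \ S)).Adj ⟨c j, hx⟩ ⟨c (j + 3), hcW _, h3⟩ :=
      (hcyc.2 j (j + 3)).mpr (Or.inr (fin4_f2 j))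
    exact (a1.reachable).trans adj32.reachable
  · have a1 : (Γ.induce (W₁ \ S)).Adj ⟨c (k + 1), hx⟩ ⟨c (k + 2), ht⟩ :=
      (hcyc.2 (k + 1) (k + 2)).mpr (Or.inl (fin4_f3 k))
    exact a1.reachable
  · exact SimpleGraph.Reachable.refl _
  · exact adj32.reachable

private noncomputable def PlanarEmbedding.restrict {V : Type} {Γ : SimpleGraph V}
    (f : PlanarEmbedding Γ) (W : Set V) : PlanarEmbedding (Γ.induce W) where
  vmap := f.vmap ∘ Subtype.val
  inj := f.inj.comp Subtype.val_injective
  emap := fun e => f.emap (e.map Subtype.val)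
  arc := by
    intro u v h
    have hΓ : Γ.Adj ↑u ↑v := h
    obtain ⟨γ, hinj, hrange⟩ := f.arc hΓ
    exact ⟨γ, hinj, by rw [hrange]; simp⟩
  disjointEdges := by
    intro e he e' he' hne x hx
    have hmem : ∀ a : Sym2 ↥W, a ∈ (Γ.induce W).edgeSet → a.map Subtype.val ∈ Γ.edgeSet := by
      rintro a ha
      induction a with
      | h p => exact ha
    have hmapne : e.map Subtype.val ≠ e'.map Subtype.val :=
      fun hc => hne (Sym2.map.injective Subtype.val_injective hc)
    have hx' := f.disjointEdges _ (hmem e he) _ (hmem e' he') hmapne hx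
    obtain ⟨w, rfl⟩ := hx'
    have hw : w ∈ e.map Subtype.val := f.vertexOnEdge _ (hmem e he) w hx.1
    rw [Sym2.mem_map] at hw
    obtain ⟨u, _, rfl⟩ := hw
    exact ⟨u, rfl⟩
  vertexOnEdge := by
    intro e he v hv
    have hmem : e.map Subtype.val ∈ Γ.edgeSet := by
      induction e with
      | h p => exact he
    have := f.vertexOnEdge _ hmem ↑v hv
    rw [Sym2.mem_map] at this
    obtain ⟨u, hu, hval⟩ := this
    rwa [Subtype.val_injective hval] at hu

private lemma side_SA {V : Type} (Γ : SimpleGraph V) (hSA : StandingAssumptions Γ)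
    (c : Fin 4 → V) (W₁ W₂ : Set V)
    (hcyc : IsInducedFourCycle Γ c)
    (hinter : W₁ ∩ W₂ = Set.range c)
    (hne : (W₁ \ Set.range c).Nonempty)
    (hedge : ∀ u v : V, Γ.Adj u v → (u ∈ W₁ ∧ v ∈ W₁) ∨ (u ∈ W₂ ∧ v ∈ W₂)) :
    StandingAssumptions (Γ.induce W₁) := by
  obtain ⟨hconn, hclique, ⟨f⟩, hcard, hvert, hedge2⟩ := hSA
  have hcW : ∀ j, c j ∈ W₁ := fun j => (show c j ∈ W₁ ∩ W₂ from hinter ▸ ⟨j, rfl⟩).1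
  have conn_of : ∀ (S : Set V) (k : Fin 4), c (k + 2) ∉ S → c (k + 3) ∉ S →
      (Γ.induce Sᶜ).Connected → (Γ.induce (W₁ \ S)).Connected := by
    intro S k h2 h3 hc
    exact side_reach Γ c W₁ W₂ hinter hedge S (c (k + 2)) h2 (hcW _)
      (sigma_reach Γ c hcyc W₁ hcW S k h2 h3) hc
  -- choosing k for a singleton
  have pick1 : ∀ x : V, ∃ k : Fin 4, c (k + 2) ∉ ({x} : Set V) ∧ c (k + 3) ∉ ({x} : Set V) := by
    intro x
    by_cases hx : x ∈ Set.range c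
    · obtain ⟨m, rfl⟩ := hx
      exact ⟨m, fun h => fin4_n2 m (hcyc.1 h), fun h => fin4_n3 m (hcyc.1 h)⟩
    · exact ⟨0, fun h => hx ⟨_, h⟩, fun h => hx ⟨_, h⟩⟩
  -- choosing k for an edge pair
  have pick2 : ∀ x y : V, Γ.Adj x y →
      ∃ k : Fin 4, c (k + 2) ∉ ({x, y} : Set V) ∧ c (k + 3) ∉ ({x, y} : Set V) := by
    intro x y hxy
    by_cases hx : x ∈ Set.range c
    · obtain ⟨m, rfl⟩ := hx
      by_cases hy : y ∈ Set.range c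
      · obtain ⟨m', rfl⟩ := hy
        rcases (hcyc.2 m m').mp hxy with rfl | rfl
        · -- m' = m + 1
          refine ⟨m, ?_, ?_⟩
          · rintro (h | h)
            · exact fin4_n2 m (hcyc.1 h)
            · exact fin4_n21 m (hcyc.1 h)
          · rintro (h | h)
            · exact fin4_n3 m (hcyc.1 h)
            · exact fin4_n31 m (hcyc.1 h)
        · -- m = m' + 1
          refine ⟨m', ?_, ?_⟩
          · rintro (h | h)
            · exact fin4_n21 m' (hcyc.1 h)
            · exact fin4_n2 m' (hcyc.1 h)
          · rintro (h | h)
            · exact fin4_n31 m' (hcyc.1 h)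
            · exact fin4_n3 m' (hcyc.1 h)
      · refine ⟨m, ?_, ?_⟩
        · rintro (h | h)
          · exact fin4_n2 m (hcyc.1 h)
          · exact hy ⟨_, h⟩
        · rintro (h | h)
          · exact fin4_n3 m (hcyc.1 h)
          · exact hy ⟨_, h⟩
    · by_cases hy : y ∈ Set.range c
      · obtain ⟨m, rfl⟩ := hy
        refine ⟨m, ?_, ?_⟩
        · rintro (h | h)
          · exact hx ⟨_, h⟩
          · exact fin4_n2 m (hcyc.1 h)
        · rintro (h | h)
          · exact hx ⟨_, h⟩
          · exact fin4_n3 m (hcyc.1 h)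
      · refine ⟨0, ?_, ?_⟩
        · rintro (h | h)
          · exact hx ⟨_, h⟩
          · exact hy ⟨_, h⟩
        · rintro (h | h)
          · exact hx ⟨_, h⟩
          · exact hy ⟨_, h⟩
  refine ⟨?_, ?_, ?_, ?_, ?_, ?_⟩
  · -- connectivity
    have := conn_of ∅ 0 (notMem_empty _) (notMem_empty _)
      (by rw [Set.compl_empty]; exact conn_univ Γ hconn)
    rwa [Set.diff_empty] at this
  · -- triangle-free
    exact hclique.comap (SimpleGraph.Embedding.induce W₁).isContained
  · exact ⟨f.restrict W₁⟩
  · -- cardinality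
    have hfinV : Finite V := by
      have h0 : 0 < Nat.card V := lt_of_lt_of_le (by norm_num) hcard
      exact (Nat.card_pos_iff.mp h0).2
    obtain ⟨w, hwW, hwc⟩ := hne
    have hces : ∀ i j : Fin 4, i ≠ j → c i ≠ c j := fun i j hij h => hij (hcyc.1 h)
    have hwne : ∀ i : Fin 4, c i ≠ w := fun i h => hwc ⟨i, h⟩
    have hsub : ({c 0, c 1, c 2, c 3, w} : Set V) ⊆ W₁ := by
      rintro x (rfl | rfl | rfl | rfl | rfl)
      exacts [hcW 0, hcW 1, hcW 2, hcW 3, hwW]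
    have h5 : ({c 0, c 1, c 2, c 3, w} : Set V).ncard = 5 := by
      rw [Set.ncard_insert_of_notMem (by
          simp only [Set.mem_insert_iff, Set.mem_singleton_iff]
          push_neg
          exact ⟨hces 0 1 (by decide), hces 0 2 (by decide), hces 0 3 (by decide), hwne 0⟩)
        (Set.toFinite _),
        Set.ncard_insert_of_notMem (by
          simp only [Set.mem_insert_iff, Set.mem_singleton_iff]
          push_neg
          exact ⟨hces 1 2 (by decide), hces 1 3 (by decide), hwne 1⟩) (Set.toFinite _),
        Set.ncard_insert_of_notMem (by
          simp only [Set.mem_insert_iff, Set.mem_singleton_iff]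
          push_neg
          exact ⟨hces 2 3 (by decide), hwne 2⟩) (Set.toFinite _),
        Set.ncard_insert_of_notMem (by
          simp only [Set.mem_singleton_iff]
          exact hwne 3) (Set.toFinite _),
        Set.ncard_singleton]
    calc (5 : ℕ) = ({c 0, c 1, c 2, c 3, w} : Set V).ncard := h5.symm
      _ ≤ W₁.ncard := Set.ncard_le_ncard hsub (Set.toFinite W₁)
      _ = Nat.card ↥W₁ := (Nat.card_coe_set_eq W₁).symm
  · -- no separating vertices
    intro v
    obtain ⟨k, h2, h3⟩ := pick1 (↑v : V)
    have hc1 : (Γ.induce ({(↑v : V)}ᶜ)).Connected := hvert ↑v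
    have := conn_of {(↑v : V)} k h2 h3 hc1
    have := transfer_conn Γ W₁ {v} (by rwa [Set.image_singleton])
    exact this
  · -- no separating edges
    intro u v huv
    have hΓuv : Γ.Adj ↑u ↑v := huv
    obtain ⟨k, h2, h3⟩ := pick2 ↑u ↑v hΓuv
    have hc1 : (Γ.induce ({(↑u : V), (↑v : V)}ᶜ)).Connected := hedge2 _ _ hΓuv
    have hmain := conn_of {(↑u : V), (↑v : V)} k h2 h3 hc1
    have himg : (Subtype.val '' ({u, v} : Set ↥W₁)) = {(↑u : V), (↑v : V)} := by
      rw [Set.image_insert_eq, Set.image_singleton]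
    exact transfer_conn Γ W₁ {u, v} (by rwa [himg])

end Stmt6Aux

/-- Lemma `leb`, first part: each side of a strong visual decomposition of a
graph satisfying the Standing Assumptions again satisfies the Standing Assumptions. -/
theorem stmt_6 {V : Type} (Γ : SimpleGraph V) (hSA : StandingAssumptions Γ)
    (f : PlanarEmbedding Γ) (c : Fin 4 → V) (W₁ W₂ : Set V)
    (hdec : StrongVisualDecomposition f c W₁ W₂) :
    StandingAssumptions (Γ.induce W₁) ∧ StandingAssumptions (Γ.induce W₂) := by
  obtain ⟨hcyc, huniv, hinter, hne1, hne2, hsep, hedge⟩ := hdec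
  constructor
  · exact side_SA Γ hSA c W₁ W₂ hcyc hinter hne1 hedge
  · exact side_SA Γ hSA c W₂ W₁ hcyc (by rw [Set.inter_comm]; exact hinter) hne2
      (fun u v h => (hedge u v h).symm)


end Paper
end

section
/- Let Γ satisfy the Standing Assumptions (connected, triangle-free, planar, at least five vertices, no separating vertices or edges) and let (Γ_1, Γ_2) be a strong visual decomposition of Γ along a 4-cycle σ. If Γ is CFS, then each Γ_i is CFS. -/
open Set

namespace Paper

/-! ### Auxiliary material for stmt_7 -/

/-- "Supported component" condition: `Γ⁴` has a component whose support is all of `V(Γ)`. -/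
def SC {V : Type*} (Γ : SimpleGraph V) : Prop :=
  ∃ s₀ : {s : Set V // IsFourCycleSet Γ s},
    ∀ v : V, ∃ t : {s : Set V // IsFourCycleSet Γ s},
      (fourCycleGraph Γ).Reachable s₀ t ∧ v ∈ t.1

lemma no_triangle {V : Type*} {Γ : SimpleGraph V} (h : Γ.CliqueFree 3) {x y z : V}
    (hxy : Γ.Adj x y) (hxz : Γ.Adj x z) (hyz : Γ.Adj y z) : False := by
  classical
  exact h {x, y, z} (SimpleGraph.is3Clique_triple_iff.2 ⟨hxy, hxz, hyz⟩)

lemma reach_of_adj_reach {α β : Type*} {G : SimpleGraph α} {H : SimpleGraph β} (f : α → β)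
    (hf : ∀ a b, G.Adj a b → H.Reachable (f a) (f b)) {u v : α} (h : G.Reachable u v) :
    H.Reachable (f u) (f v) := by
  obtain ⟨w⟩ := h
  induction w with
  | nil => exact SimpleGraph.Reachable.refl _
  | cons h p ih => exact (hf _ _ h).trans ih

lemma fourCycleSet_map {V W : Type*} {G : SimpleGraph V} {H : SimpleGraph W} (φ : G ≃g H)
    {s : Set V} (hs : IsFourCycleSet G s) : IsFourCycleSet H (φ '' s) := by
  obtain ⟨c, ⟨hinj, hadj⟩, hr⟩ := hs
  refine ⟨fun i => φ (c i), ⟨fun i j hij => hinj (φ.injective hij), fun i j => ?_⟩, ?_⟩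
  · rw [φ.map_adj_iff]; exact hadj i j
  · rw [← hr, ← Set.range_comp]; rfl

lemma sc_of_iso {V W : Type*} {G : SimpleGraph V} {H : SimpleGraph W} (φ : G ≃g H)
    (hG : SC G) : SC H := by
  obtain ⟨s₀, hs₀⟩ := hG
  let F : {s : Set V // IsFourCycleSet G s} → {s : Set W // IsFourCycleSet H s} :=
    fun s => ⟨φ '' s.1, fourCycleSet_map φ s.2⟩
  have hFadj : ∀ s t, (fourCycleGraph G).Adj s t → (fourCycleGraph H).Adj (F s) (F t) := by
    rintro s t hst
    rw [fourCycleGraph, SimpleGraph.fromRel_adj] at hst ⊢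
    obtain ⟨hne, hrel⟩ := hst
    have hne' : F s ≠ F t := by
      intro h
      apply hne
      have : φ '' s.1 = φ '' t.1 := congrArg Subtype.val h
      exact Subtype.ext (Set.image_injective.2 φ.injective this)
    refine ⟨hne', ?_⟩
    have : ∀ u v : {s : Set V // IsFourCycleSet G s},
        (∃ a b : V, a ≠ b ∧ ¬G.Adj a b ∧ a ∈ u.1 ∩ v.1 ∧ b ∈ u.1 ∩ v.1) →
        (∃ a b : W, a ≠ b ∧ ¬H.Adj a b ∧ a ∈ (F u).1 ∩ (F v).1 ∧ b ∈ (F u).1 ∩ (F v).1) := by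
      rintro u v ⟨a, b, hab, hnadj, ⟨ha1, ha2⟩, ⟨hb1, hb2⟩⟩
      refine ⟨φ a, φ b, fun h => hab (φ.injective h), ?_, ⟨⟨a, ha1, rfl⟩, ⟨a, ha2, rfl⟩⟩,
        ⟨⟨b, hb1, rfl⟩, ⟨b, hb2, rfl⟩⟩⟩
      rw [φ.map_adj_iff]; exact hnadj
    rcases hrel with h | h
    · exact Or.inl (this _ _ h)
    · exact Or.inr (this _ _ h)
  let Fhom : fourCycleGraph G →g fourCycleGraph H := ⟨F, fun h => hFadj _ _ h⟩
  refine ⟨F s₀, fun w => ?_⟩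
  obtain ⟨t, ht, hmem⟩ := hs₀ (φ.symm w)
  refine ⟨F t, ht.map Fhom, ?_⟩
  exact ⟨φ.symm w, hmem, φ.apply_symm_apply w⟩

lemma cfs_of_sc {V : Type*} {Γ : SimpleGraph V} {W : Set V} (hne : W.Nonempty)
    (h : SC (Γ.induce W)) : CFS (Γ.induce W) := by
  have : Nonempty ↥W := hne.to_subtype
  refine ⟨Set.univ, ∅, by simp, by simp, Set.univ_nonempty, by simp, by simp, ?_⟩
  exact sc_of_iso (SimpleGraph.induceUnivIso (Γ.induce W)).symm h

lemma sc_of_cfs {V : Type*} {Γ : SimpleGraph V} (hfree : Γ.CliqueFree 3)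
    (h : CFS Γ) : SC Γ := by
  obtain ⟨Ω, K, hunion, hdisj, hΩne, hK, hΩK, s₀, hs₀⟩ := h
  have hKempty : K = ∅ := by
    rw [Set.eq_empty_iff_forall_notMem]
    intro b hb
    obtain ⟨c₀, ⟨hinj, hadj⟩, hr⟩ := s₀.2
    have h01 : (Γ.induce Ω).Adj (c₀ 0) (c₀ 1) := (hadj 0 1).2 (Or.inl rfl)
    have hg : Γ.Adj ((c₀ 0 : ↥Ω) : V) ((c₀ 1 : ↥Ω) : V) := by simpa using h01
    exact no_triangle hfree hg (hΩK _ (c₀ 0).2 b hb) (hΩK _ (c₀ 1).2 b hb)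
  subst hKempty
  rw [Set.union_empty] at hunion
  subst hunion
  exact sc_of_iso (SimpleGraph.induceUnivIso Γ) ⟨s₀, hs₀⟩

/-- Build an induced 4-cycle from four vertices with the right (non-)adjacencies. -/
lemma build4 {V : Type*} {Γ : SimpleGraph V} {a b x y : V}
    (hab : Γ.Adj a b) (hbx : Γ.Adj b x) (hxy : Γ.Adj x y) (hya : Γ.Adj y a)
    (hax : ¬Γ.Adj a x) (hby : ¬Γ.Adj b y) (hax' : a ≠ x) (hby' : b ≠ y) :
    IsInducedFourCycle Γ ![a, b, x, y] := by
  have hne1 : a ≠ b := hab.ne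
  have hne2 : b ≠ x := hbx.ne
  have hne3 : x ≠ y := hxy.ne
  have hne4 : y ≠ a := hya.ne
  have hxa : ¬Γ.Adj x a := fun h => hax h.symm
  have hyb : ¬Γ.Adj y b := fun h => hby h.symm
  constructor
  · intro i j hij
    fin_cases i <;> fin_cases j <;>
      simp_all [Matrix.cons_val_zero, Matrix.cons_val_one]
  · intro i j
    fin_cases i <;> fin_cases j <;>
      simp [Matrix.cons_val_zero, Matrix.cons_val_one, hab, hbx, hxy, hya,
        hab.symm, hbx.symm, hxy.symm, hya.symm, hax, hby, hxa, hyb, hax', hby',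
        Γ.irrefl, hab.ne', hbx.ne', hxy.ne', hya.ne']

lemma lift4 {V : Type*} {Γ : SimpleGraph V} {W : Set V} {s : Set V}
    (hs : IsFourCycleSet Γ s) (hsub : s ⊆ W) :
    IsFourCycleSet (Γ.induce W) {x : ↥W | (x : V) ∈ s} := by
  obtain ⟨d, ⟨hinj, hadj⟩, hr⟩ := hs
  have hmem : ∀ i, d i ∈ W := fun i => hsub (hr ▸ ⟨i, rfl⟩)
  refine ⟨fun i => ⟨d i, hmem i⟩, ⟨fun i j hij => hinj (congrArg Subtype.val hij),
    fun i j => ?_⟩, ?_⟩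
  · have h' : (Γ.induce W).Adj ⟨d i, hmem i⟩ ⟨d j, hmem j⟩ ↔ Γ.Adj (d i) (d j) := by simp
    rw [h']; exact hadj i j
  · ext x
    simp only [Set.mem_range, Set.mem_setOf_eq, Subtype.ext_iff, ← hr]

lemma hsetinj_aux {V : Type*} {W : Set V} {s t : Set V} (hs : s ⊆ W) (ht : t ⊆ W)
    (h : {x : ↥W | (x : V) ∈ s} = {x : ↥W | (x : V) ∈ t}) : s = t := by
  ext v
  constructor
  · intro hv; exact (Set.ext_iff.1 h ⟨v, hs hv⟩).1 hv
  · intro hv; exact (Set.ext_iff.1 h ⟨v, ht hv⟩).2 hv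

lemma key {V : Type*} {Γ : SimpleGraph V} (hfree : Γ.CliqueFree 3)
    {c : Fin 4 → V} (hc : IsInducedFourCycle Γ c) {W₁ W₂ : Set V}
    (hinter : W₁ ∩ W₂ = Set.range c)
    (h2 : (W₂ \ Set.range c).Nonempty)
    (hedge : ∀ u v : V, Γ.Adj u v → (u ∈ W₁ ∧ v ∈ W₁) ∨ (u ∈ W₂ ∧ v ∈ W₂))
    (hSC : SC Γ) : SC (Γ.induce W₁) := by
  classical
  have hrc1 : Set.range c ⊆ W₁ := hinter ▸ Set.inter_subset_left
  have hσΓ : IsFourCycleSet Γ (Set.range c) := ⟨c, hc, rfl⟩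
  set σ' : {s : Set ↥W₁ // IsFourCycleSet (Γ.induce W₁) s} :=
    ⟨{x : ↥W₁ | (x : V) ∈ Set.range c}, lift4 hσΓ hrc1⟩ with hσ'def
  set π : {s : Set V // IsFourCycleSet Γ s} → {s : Set ↥W₁ // IsFourCycleSet (Γ.induce W₁) s} :=
    fun τ => if h : τ.1 ⊆ W₁ then ⟨{x : ↥W₁ | (x : V) ∈ τ.1}, lift4 τ.2 h⟩ else σ' with hπdef
  have hπpos : ∀ (τ : {s : Set V // IsFourCycleSet Γ s}) (h : τ.1 ⊆ W₁),
      π τ = ⟨{x : ↥W₁ | (x : V) ∈ τ.1}, lift4 τ.2 h⟩ := fun τ h => dif_pos h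
  have hπneg : ∀ (τ : {s : Set V // IsFourCycleSet Γ s}), ¬ τ.1 ⊆ W₁ → π τ = σ' :=
    fun τ h => dif_neg h
  -- a nonadjacent pair of a square escaping W₁, itself inside W₁, lies on σ
  have hpair : ∀ (τ : {s : Set V // IsFourCycleSet Γ s}) (a b : V), ¬ (τ.1 ⊆ W₁) →
      a ≠ b → ¬Γ.Adj a b → a ∈ τ.1 → b ∈ τ.1 → a ∈ W₁ → b ∈ W₁ →
      a ∈ Set.range c ∧ b ∈ Set.range c := by
    intro τ a b hτ hab hnadj ha hb haW hbW
    obtain ⟨d, ⟨hinj, hadjd⟩, hr⟩ := τ.2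
    obtain ⟨z, hz, hzW⟩ := Set.not_subset.1 hτ
    rw [← hr] at ha hb hz
    obtain ⟨i, hi⟩ := ha; obtain ⟨j, hj⟩ := hb; obtain ⟨k, hk⟩ := hz
    subst hi; subst hj; subst hk
    have hij : i ≠ j := fun h => hab (h ▸ rfl)
    have hno : ¬(j = i + 1 ∨ i = j + 1) := fun h => hnadj ((hadjd i j).2 h)
    have hopp : j = i + 2 := by
      have hgen : ∀ i j : Fin 4, i ≠ j → ¬(j = i + 1 ∨ i = j + 1) → j = i + 2 := by decide
      exact hgen i j hij hno
    have hki : k ≠ i := fun h => hzW (h ▸ haW)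
    have hkj : k ≠ j := fun h => hzW (h ▸ hbW)
    have hk' : k = i + 1 ∨ k = i + 3 := by
      have hgen : ∀ i k : Fin 4, k ≠ i → k ≠ i + 2 → (k = i + 1 ∨ k = i + 3) := by decide
      exact hgen i k hki (hopp ▸ hkj)
    have hza : Γ.Adj (d k) (d i) := by
      refine (hadjd k i).2 ?_
      rcases hk' with h | h
      · exact Or.inr h
      · refine Or.inl ?_
        rw [h]
        have : ∀ i : Fin 4, i = i + 3 + 1 := by decide
        exact this i
    have hzb : Γ.Adj (d k) (d j) := by
      refine (hadjd k j).2 ?_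
      rw [hopp]
      rcases hk' with h | h
      · refine Or.inl ?_
        rw [h]
        have : ∀ i : Fin 4, i + 2 = i + 1 + 1 := by decide
        exact this i
      · refine Or.inr ?_
        rw [h]
        have : ∀ i : Fin 4, i + 3 = i + 2 + 1 := by decide
        exact this i
    constructor
    · rcases hedge _ _ hza with ⟨h, _⟩ | ⟨_, h⟩
      · exact absurd h hzW
      · exact hinter ▸ ⟨haW, h⟩
    · rcases hedge _ _ hzb with ⟨h, _⟩ | ⟨_, h⟩
      · exact absurd h hzW
      · exact hinter ▸ ⟨hbW, h⟩
  -- crossing step: a square inside W₁ adjacent to one escaping W₁ is adjacent (or equal) to σ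
  have hcross : ∀ (τ τ' : {s : Set V // IsFourCycleSet Γ s}) (a b : V),
      a ≠ b → ¬Γ.Adj a b → a ∈ τ.1 → a ∈ τ'.1 → b ∈ τ.1 → b ∈ τ'.1 →
      (h1 : τ.1 ⊆ W₁) → ¬ τ'.1 ⊆ W₁ →
      (fourCycleGraph (Γ.induce W₁)).Reachable (π τ) σ' := by
    intro τ τ' a b hab hnadj ha1 ha2 hb1 hb2 h1 h1'
    obtain ⟨haσ, hbσ⟩ := hpair τ' a b h1' hab hnadj ha2 hb2 (h1 ha1) (h1 hb1)
    rw [hπpos τ h1]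
    by_cases heq : τ.1 = Set.range c
    · have hτσ : (⟨{x : ↥W₁ | (x : V) ∈ τ.1}, lift4 τ.2 h1⟩ :
          {s : Set ↥W₁ // IsFourCycleSet (Γ.induce W₁) s}) = σ' := by
        apply Subtype.ext
        ext x
        simp [heq, hσ'def]
      rw [hτσ]
    · apply SimpleGraph.Adj.reachable
      rw [fourCycleGraph, SimpleGraph.fromRel_adj]
      refine ⟨fun h => heq (hsetinj_aux h1 hrc1 (congrArg Subtype.val h)), Or.inl
        ⟨⟨a, h1 ha1⟩, ⟨b, h1 hb1⟩, fun h => hab (congrArg Subtype.val h),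
          by simpa using hnadj, ⟨ha1, haσ⟩, ⟨hb1, hbσ⟩⟩⟩
  -- adjacency in Γ⁴ maps to reachability in (Γ|W₁)⁴
  have hstep : ∀ τ τ', (fourCycleGraph Γ).Adj τ τ' →
      (fourCycleGraph (Γ.induce W₁)).Reachable (π τ) (π τ') := by
    intro τ τ' hadj
    rw [fourCycleGraph, SimpleGraph.fromRel_adj] at hadj
    obtain ⟨hne, hrel⟩ := hadj
    obtain ⟨a, b, hab, hnadj, ha1, ha2, hb1, hb2⟩ :
        ∃ a b : V, a ≠ b ∧ ¬Γ.Adj a b ∧ a ∈ τ.1 ∧ a ∈ τ'.1 ∧ b ∈ τ.1 ∧ b ∈ τ'.1 := by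
      rcases hrel with ⟨a, b, h1, h2, h3, h4⟩ | ⟨a, b, h1, h2, h3, h4⟩
      · exact ⟨a, b, h1, h2, h3.1, h3.2, h4.1, h4.2⟩
      · exact ⟨a, b, h1, h2, h3.2, h3.1, h4.2, h4.1⟩
    by_cases h1 : τ.1 ⊆ W₁ <;> by_cases h1' : τ'.1 ⊆ W₁
    · -- both squares inside W₁
      rw [hπpos τ h1, hπpos τ' h1']
      apply SimpleGraph.Adj.reachable
      rw [fourCycleGraph, SimpleGraph.fromRel_adj]
      refine ⟨fun h => hne (Subtype.ext (hsetinj_aux h1 h1' (congrArg Subtype.val h))),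
        Or.inl ⟨⟨a, h1 ha1⟩, ⟨b, h1 hb1⟩, fun h => hab (congrArg Subtype.val h),
          by simpa using hnadj, ⟨ha1, ha2⟩, ⟨hb1, hb2⟩⟩⟩
    · rw [hπneg τ' h1']
      exact hcross τ τ' a b hab hnadj ha1 ha2 hb1 hb2 h1 h1'
    · rw [hπneg τ h1]
      exact (hcross τ' τ a b hab hnadj ha2 ha1 hb2 hb1 h1' h1).symm
    · rw [hπneg τ h1, hπneg τ' h1']
  obtain ⟨sΓ, hsΓ⟩ := hSC
  have hbase : (fourCycleGraph (Γ.induce W₁)).Reachable (π sΓ) σ' := by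
    obtain ⟨y, hy2, hyc⟩ := h2
    have hyW1 : y ∉ W₁ := fun h => hyc (hinter ▸ ⟨h, hy2⟩)
    obtain ⟨t, ht, hyt⟩ := hsΓ y
    have hre := reach_of_adj_reach π hstep ht
    rwa [hπneg t (fun hsub => hyW1 (hsub hyt))] at hre
  refine ⟨σ', fun v => ?_⟩
  by_cases hv : (v : V) ∈ Set.range c
  · exact ⟨σ', SimpleGraph.Reachable.refl _, hv⟩
  · obtain ⟨t, ht, hvt⟩ := hsΓ (v : V)
    by_cases htW : t.1 ⊆ W₁
    · refine ⟨π t, hbase.symm.trans (reach_of_adj_reach π hstep ht), ?_⟩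
      rw [hπpos t htW]
      exact hvt
    · -- v lies on a straddling square; build a replacement square inside W₁
      obtain ⟨d, ⟨hinj, hadjd⟩, hr⟩ := t.2
      obtain ⟨z, hz, hzW⟩ := Set.not_subset.1 htW
      rw [← hr] at hvt hz
      obtain ⟨i, hi⟩ := hvt
      obtain ⟨k, hk⟩ := hz
      subst hk
      have hvW1 : (v : V) ∈ W₁ := v.2
      have hvW2 : (v : V) ∉ W₂ := fun h => hv (hinter ▸ ⟨v.2, h⟩)
      have hadj1 : Γ.Adj (d i) (d (i + 1)) := (hadjd i (i + 1)).2 (Or.inl rfl)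
      have hadj2 : Γ.Adj (d i) (d (i + 3)) := by
        refine (hadjd i (i + 3)).2 (Or.inr ?_)
        have : ∀ i : Fin 4, i = i + 3 + 1 := by decide
        exact this i
      have hpW : d (i + 1) ∈ W₁ := by
        rcases hedge _ _ hadj1 with ⟨_, h⟩ | ⟨h, _⟩
        · exact h
        · rw [hi] at h; exact absurd h hvW2
      have hqW : d (i + 3) ∈ W₁ := by
        rcases hedge _ _ hadj2 with ⟨_, h⟩ | ⟨h, _⟩
        · exact h
        · rw [hi] at h; exact absurd h hvW2
      have hki : k ≠ i := fun h => hzW (by rw [h, hi]; exact hvW1)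
      have hk1 : k ≠ i + 1 := fun h => hzW (h ▸ hpW)
      have hk3 : k ≠ i + 3 := fun h => hzW (h ▸ hqW)
      have hk2 : k = i + 2 := by
        have hgen : ∀ i k : Fin 4, k ≠ i → k ≠ i + 1 → k ≠ i + 3 → k = i + 2 := by decide
        exact hgen i k hki hk1 hk3
      subst hk2
      have hadjzp : Γ.Adj (d (i + 2)) (d (i + 1)) := by
        refine (hadjd (i + 2) (i + 1)).2 (Or.inr ?_)
        have hg : ∀ i : Fin 4, i + 2 = i + 1 + 1 := by decide
        exact hg i
      have hadjzq : Γ.Adj (d (i + 2)) (d (i + 3)) := by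
        refine (hadjd (i + 2) (i + 3)).2 (Or.inl ?_)
        have hg : ∀ i : Fin 4, i + 3 = i + 2 + 1 := by decide
        exact hg i
      have hpσ : d (i + 1) ∈ Set.range c := by
        rcases hedge _ _ hadjzp with ⟨h, _⟩ | ⟨_, h⟩
        · exact absurd h hzW
        · exact hinter ▸ ⟨hpW, h⟩
      have hqσ : d (i + 3) ∈ Set.range c := by
        rcases hedge _ _ hadjzq with ⟨h, _⟩ | ⟨_, h⟩
        · exact absurd h hzW
        · exact hinter ▸ ⟨hqW, h⟩
      obtain ⟨m, hm⟩ := hpσ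
      obtain ⟨n, hn⟩ := hqσ
      have hpq : d (i + 1) ≠ d (i + 3) := by
        intro h
        have h13 := hinj h
        have : ∀ i : Fin 4, i + 1 ≠ i + 3 := by decide
        exact this i h13
      have hnadjpq : ¬Γ.Adj (d (i + 1)) (d (i + 3)) := by
        intro h
        have hcond := (hadjd (i + 1) (i + 3)).1 h
        have : ∀ i : Fin 4, ¬(i + 3 = i + 1 + 1 ∨ i + 1 = i + 3 + 1) := by decide
        exact this i hcond
      have hmn : n = m + 2 := by
        have hne : m ≠ n := fun h => hpq (by rw [← hm, ← hn, h])
        have hno : ¬(n = m + 1 ∨ m = n + 1) := by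
          intro h
          exact hnadjpq (hm ▸ hn ▸ (hc.2 m n).2 h)
        have hgen : ∀ m n : Fin 4, m ≠ n → ¬(n = m + 1 ∨ m = n + 1) → n = m + 2 := by decide
        exact hgen m n hne hno
      -- the replacement square ![v, c m, c (m+1), c (m+2)]
      have hd4 : IsInducedFourCycle Γ ![(v : V), c m, c (m + 1), c (m + 2)] := by
        have e1 : Γ.Adj (v : V) (c m) := by rw [hm, ← hi]; exact hadj1
        have e2 : Γ.Adj (c m) (c (m + 1)) := (hc.2 m (m + 1)).2 (Or.inl rfl)
        have e3 : Γ.Adj (c (m + 1)) (c (m + 2)) := by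
          refine (hc.2 (m + 1) (m + 2)).2 (Or.inl ?_)
          have hg : ∀ m : Fin 4, m + 2 = m + 1 + 1 := by decide
          exact hg m
        have e4 : Γ.Adj (c (m + 2)) (v : V) := by
          rw [← hmn, hn, ← hi]; exact hadj2.symm
        have n1 : ¬Γ.Adj (v : V) (c (m + 1)) := fun h => no_triangle hfree e1 h e2
        have n2 : ¬Γ.Adj (c m) (c (m + 2)) := by
          intro h
          have hcond := (hc.2 m (m + 2)).1 h
          have : ∀ m : Fin 4, ¬(m + 2 = m + 1 ∨ m = m + 2 + 1) := by decide
          exact this m hcond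
        have ne1 : (v : V) ≠ c (m + 1) := fun h => hv (h ▸ ⟨m + 1, rfl⟩)
        have ne2 : c m ≠ c (m + 2) := by
          intro h
          have := hc.1 h
          have hg : ∀ m : Fin 4, m ≠ m + 2 := by decide
          exact hg m this
        exact build4 e1 e2 e3 e4 n1 n2 ne1 ne2
      have hsub4 : Set.range ![(v : V), c m, c (m + 1), c (m + 2)] ⊆ W₁ := by
        rintro x ⟨l, rfl⟩
        fin_cases l
        · exact v.2
        · exact hrc1 ⟨m, rfl⟩
        · exact hrc1 ⟨m + 1, rfl⟩
        · exact hrc1 ⟨m + 2, rfl⟩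
      set τstar : {s : Set ↥W₁ // IsFourCycleSet (Γ.induce W₁) s} :=
        ⟨{x : ↥W₁ | (x : V) ∈ Set.range ![(v : V), c m, c (m + 1), c (m + 2)]},
          lift4 ⟨_, hd4, rfl⟩ hsub4⟩ with hτstar
      have hvτ : v ∈ τstar.1 := ⟨0, by simp⟩
      refine ⟨τstar, SimpleGraph.Adj.reachable ?_, hvτ⟩
      rw [fourCycleGraph, SimpleGraph.fromRel_adj]
      refine ⟨?_, Or.inl ⟨⟨c m, hrc1 ⟨m, rfl⟩⟩, ⟨c (m + 2), hrc1 ⟨m + 2, rfl⟩⟩, ?_, ?_, ?_, ?_⟩⟩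
      · intro h
        have : v ∈ σ'.1 := by rw [h]; exact hvτ
        exact hv this
      · intro h
        have h' := congrArg Subtype.val h
        have := hc.1 h'
        have hg : ∀ m : Fin 4, m ≠ m + 2 := by decide
        exact hg m this
      · have n2 : ¬Γ.Adj (c m) (c (m + 2)) := by
          intro h
          have hcond := (hc.2 m (m + 2)).1 h
          have : ∀ m : Fin 4, ¬(m + 2 = m + 1 ∨ m = m + 2 + 1) := by decide
          exact this m hcond
        simpa using n2
      · exact ⟨⟨m, rfl⟩, ⟨1, by simp⟩⟩
      · exact ⟨⟨m + 2, rfl⟩, ⟨3, by simp⟩⟩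

/-- Lemma `leb`, second part: if `Γ` is CFS, then each side of a strong visual
decomposition of `Γ` is CFS. -/
theorem stmt_7 {V : Type} (Γ : SimpleGraph V) (hSA : StandingAssumptions Γ)
    (f : PlanarEmbedding Γ) (c : Fin 4 → V) (W₁ W₂ : Set V)
    (hdec : StrongVisualDecomposition f c W₁ W₂)
    (hCFS : CFS Γ) :
    CFS (Γ.induce W₁) ∧ CFS (Γ.induce W₂) := by
  obtain ⟨hc4, hunion, hinter, hne₁, hne₂, hsep, hedge⟩ := hdec
  have hfree : Γ.CliqueFree 3 := hSA.2.1
  have hSCΓ : SC Γ := sc_of_cfs hfree hCFS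
  have hrc1 : Set.range c ⊆ W₁ := hinter ▸ Set.inter_subset_left
  have hrc2 : Set.range c ⊆ W₂ := hinter ▸ Set.inter_subset_right
  have hinter' : W₂ ∩ W₁ = Set.range c := by rw [Set.inter_comm]; exact hinter
  have hedge' : ∀ u v : V, Γ.Adj u v → (u ∈ W₂ ∧ v ∈ W₂) ∨ (u ∈ W₁ ∧ v ∈ W₁) :=
    fun u v h => (hedge u v h).symm
  constructor
  · exact cfs_of_sc ⟨c 0, hrc1 ⟨0, rfl⟩⟩ (key hfree hc4 hinter hne₂ hedge hSCΓ)
  · exact cfs_of_sc ⟨c 0, hrc2 ⟨0, rfl⟩⟩ (key hfree hc4 hinter' hne₁ hedge' hSCΓ)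

end Paper
end
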